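/- Let (Ω, F, P) support independent random variables U and θ, where U is uniformly distributed on [0,1] and P[θ = −1] = 1/2 = P[θ = 1]. Let F_0 = {∅, Ω}, F_1 = σ(U), and F_t = σ(U, θ) for t ∈ ℕ, t ≥ 2. Define S_t = (θ/U) · 1_{{t ≥ 2}} and Z_t = 1_{{t = 0}} + 2U · 1_{{t ≥ 1}}. Then Z is a strictly positive, uniformly integrable P–martingale; moreover Z_t S_t = 2θ · 1_{{t ≥ 2}}, so E_P[Z_t |S_t|] ≤ 2 for all t ∈ ℕ₀ and the product process (Z_t S_t)_{t∈ℕ₀} is a P–martingale. -/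

import Mathlib

open MeasureTheory Filter Set ENNReal
open scoped Classical

noncomputable section

/-- Generalized conditional expectation `E[Y | G]` of a nonnegative random variable `Y`,
defined as the (a.s. monotone) limit `lim_k E[Y ∧ k | G]`, with values in `ℝ≥0∞`. -/
noncomputable def gce {Ω : Type*} {m0 : MeasurableSpace Ω} (G : MeasurableSpace Ω)
    (μ : @Measure Ω m0) (Y : Ω → ℝ) : Ω → ℝ≥0∞ :=
  fun ω => ⨆ k : ℕ, ENNReal.ofReal ((μ[fun ω' => min (Y ω') (k : ℝ)|G]) ω)

/-- Generalized conditional expectation `E[W | G] = E[W⁺ | G] - E[W⁻ | G]` of a real random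
variable `W` (meaningful when `E[|W| | G] < ∞` a.s.). -/
noncomputable def gcondexp {Ω : Type*} {m0 : MeasurableSpace Ω} (G : MeasurableSpace Ω)
    (μ : @Measure Ω m0) (W : Ω → ℝ) : Ω → ℝ :=
  fun ω => (@gce Ω m0 G μ (fun ω' => max (W ω') 0) ω).toReal
    - (@gce Ω m0 G μ (fun ω' => max (-(W ω')) 0) ω).toReal

/-- A (possibly infinite) stopping time for a discrete-time filtration. -/
def IsStoppingTimeE {Ω : Type*} [m0 : MeasurableSpace Ω] (ℱ : Filtration ℕ m0)
    (τ : Ω → ℕ∞) : Prop :=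
  ∀ n : ℕ, MeasurableSet[ℱ n] {ω | τ ω ≤ (n : ℕ∞)}

/-- The stopped process `S^τ 1_{τ > 0}`. -/
noncomputable def stoppedAt {Ω E : Type*} [Zero E] (S : ℕ → Ω → E) (τ : Ω → ℕ∞) :
    ℕ → Ω → E :=
  fun t ω => if 0 < τ ω then S ((min (t : ℕ∞) (τ ω)).toNat) ω else 0

/-- A discrete-time `d`-dimensional process `S` is a local martingale if it is adapted and
there exist stopping times `τ n → ∞` a.s. such that each stopped process
`S^{τ n} 1_{τ n > 0}` is a martingale. -/
def IsLocalMartingale {Ω E : Type*} [m0 : MeasurableSpace Ω]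
    [NormedAddCommGroup E] [NormedSpace ℝ E] [CompleteSpace E]
    (ℱ : Filtration ℕ m0) (μ : Measure Ω) (S : ℕ → Ω → E) : Prop :=
  StronglyAdapted ℱ S ∧ ∃ τ : ℕ → Ω → ℕ∞,
    (∀ n, IsStoppingTimeE ℱ (τ n)) ∧
    (∀ᵐ ω ∂μ, ∀ M : ℕ, ∀ᶠ n in atTop, (M : ℕ∞) ≤ τ n ω) ∧
    (∀ n, Martingale (stoppedAt S (τ n)) ℱ μ)

/-- **Example (continued).** With the same setup and `Z_t = 1_{t = 0} + 2U 1_{t ≥ 1}`: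
`Z` is an (a.s.) strictly positive uniformly integrable martingale, `Z_t S_t = 2θ 1_{t ≥ 2}`
a.s., `E[Z_t |S_t|] ≤ 2` for all `t`, and `Z S` is a martingale. -/
theorem stmt16 {Ω : Type*} {m0 : MeasurableSpace Ω} (P : Measure Ω) [IsProbabilityMeasure P]
    (U θ : Ω → ℝ) (hU : Measurable U) (hθ : Measurable θ)
    (hindep : ProbabilityTheory.IndepFun U θ P)
    (hUlaw : P.map U = MeasureTheory.volume.restrict (Set.Icc (0 : ℝ) 1))
    (hθm : P {ω | θ ω = -1} = 1 / 2) (hθp : P {ω | θ ω = 1} = 1 / 2)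
    (ℱ : Filtration ℕ m0)
    (hF0 : (ℱ 0 : MeasurableSpace Ω) = ⊥)
    (hF1 : (ℱ 1 : MeasurableSpace Ω) = MeasurableSpace.comap U Real.measurableSpace)
    (hFt : ∀ t, 2 ≤ t → (ℱ t : MeasurableSpace Ω) =
      MeasurableSpace.comap U Real.measurableSpace ⊔
        MeasurableSpace.comap θ Real.measurableSpace)
    (S : ℕ → Ω → ℝ) (hSdef : ∀ t ω, S t ω = if 2 ≤ t then θ ω / U ω else 0)
    (Z : ℕ → Ω → ℝ) (hZdef : ∀ t ω, Z t ω = if t = 0 then 1 else 2 * U ω) :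
    (∀ t, ∀ᵐ ω ∂P, 0 < Z t ω) ∧
    Martingale Z ℱ P ∧
    UniformIntegrable Z 1 P ∧
    (∀ t, (fun ω => Z t ω * S t ω) =ᵐ[P] fun ω => if 2 ≤ t then 2 * θ ω else 0) ∧
    (∀ t, (∫⁻ ω, ENNReal.ofReal (Z t ω * |S t ω|) ∂P) ≤ 2) ∧
    Martingale (fun t ω => Z t ω * S t ω) ℱ P := by
  -- U ∈ [0,1] a.s.
  have hU01 : ∀ᵐ ω ∂P, U ω ∈ Icc (0:ℝ) 1 := by
    have h0 : P (U ⁻¹' (Icc (0:ℝ) 1)ᶜ) = 0 := by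
      rw [← Measure.map_apply hU measurableSet_Icc.compl, hUlaw,
        Measure.restrict_apply measurableSet_Icc.compl]
      simp
    rw [ae_iff]
    exact h0
  -- U > 0 a.s.
  have hUpos : ∀ᵐ ω ∂P, 0 < U ω := by
    have h0 : P (U ⁻¹' (Iic (0:ℝ))) = 0 := by
      rw [← Measure.map_apply hU measurableSet_Iic, hUlaw,
        Measure.restrict_apply measurableSet_Iic]
      have : Iic (0:ℝ) ∩ Icc 0 1 = {0} := by
        ext x
        simp only [mem_inter_iff, mem_Iic, mem_Icc, mem_singleton_iff]
        constructor
        · rintro ⟨h1, h2, _⟩; linarith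
        · rintro rfl; norm_num
      rw [this]; simp
    rw [ae_iff]
    have hset : {a | ¬ (0:ℝ) < U a} = U ⁻¹' (Iic 0) := by ext a; simp [not_lt]
    rw [hset]
    exact h0
  -- θ = ±1 a.s.
  have hθ11 : ∀ᵐ ω ∂P, θ ω = -1 ∨ θ ω = 1 := by
    have hA : MeasurableSet {ω | θ ω = -1} := hθ (measurableSet_singleton (-1))
    have hB : MeasurableSet {ω | θ ω = 1} := hθ (measurableSet_singleton 1)
    have hdisj : Disjoint {ω | θ ω = -1} {ω | θ ω = 1} := by
      rw [Set.disjoint_left]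
      rintro ω h1 h2
      simp only [mem_setOf_eq] at h1 h2
      rw [h1] at h2; norm_num at h2
    have hun : P ({ω | θ ω = -1} ∪ {ω | θ ω = 1}) = 1 := by
      rw [measure_union hdisj hB, hθm, hθp]
      rw [ENNReal.add_halves]
    have : P ({ω | θ ω = -1} ∪ {ω | θ ω = 1})ᶜ = 0 := by
      rw [measure_compl (hA.union hB) (measure_ne_top _ _), hun, measure_univ, tsub_self]
    rw [ae_iff]
    have hset : {a | ¬ (θ a = -1 ∨ θ a = 1)} = ({ω | θ ω = -1} ∪ {ω | θ ω = 1})ᶜ := by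
      ext a; simp [not_or]
    rw [hset]
    exact this
  -- integrability
  have hθint : Integrable θ P := by
    refine (integrable_const (1:ℝ)).mono' hθ.aestronglyMeasurable ?_
    filter_upwards [hθ11] with ω hω
    rcases hω with h | h <;> rw [h] <;> simp
  have hUint : Integrable U P := by
    refine (integrable_const (1:ℝ)).mono' hU.aestronglyMeasurable ?_
    filter_upwards [hU01] with ω hω
    rw [Real.norm_eq_abs, abs_of_nonneg hω.1]; exact hω.2
  -- ∫ U = 1/2
  have hUmean : ∫ ω, U ω ∂P = 1/2 := by
    have h1 : ∫ ω, U ω ∂P = ∫ x, x ∂(P.map U) :=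
      (integral_map hU.aemeasurable aestronglyMeasurable_id).symm
    rw [h1, hUlaw]
    have h2 : ∫ x in Icc (0:ℝ) 1, x = ∫ x in Ioc (0:ℝ) 1, x :=
      integral_Icc_eq_integral_Ioc
    have h3 : ∫ x in Ioc (0:ℝ) 1, x = ∫ x in (0:ℝ)..1, x :=
      (intervalIntegral.integral_of_le (by norm_num)).symm
    calc ∫ x in Icc (0:ℝ) 1, x = ∫ x in (0:ℝ)..1, x := by rw [h2, h3]
      _ = 1/2 := by rw [integral_id]; norm_num
  -- ∫ θ = 0
  have hθmean : ∫ ω, θ ω ∂P = 0 := by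
    have hA : MeasurableSet {ω | θ ω = -1} := hθ (measurableSet_singleton (-1))
    have hB : MeasurableSet {ω | θ ω = 1} := hθ (measurableSet_singleton 1)
    have hae : θ =ᵐ[P] fun ω => ({ω | θ ω = 1}).indicator (fun _ => (1:ℝ)) ω
        - ({ω | θ ω = -1}).indicator (fun _ => (1:ℝ)) ω := by
      filter_upwards [hθ11] with ω hω
      rcases hω with h | h
      · rw [h]
        rw [Set.indicator_of_notMem (by simp only [mem_setOf_eq, h]; norm_num : ω ∉ {ω | θ ω = 1}) , Set.indicator_of_mem (by simp [h])]
        norm_num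
      · rw [h]
        rw [Set.indicator_of_mem (by simp [h]), Set.indicator_of_notMem (by simp only [mem_setOf_eq, h]; norm_num : ω ∉ {ω | θ ω = -1})]
        norm_num
    have hiB : Integrable (({ω | θ ω = 1}).indicator (fun _ => (1:ℝ))) P :=
      (integrable_const (1:ℝ)).indicator hB
    have hiA : Integrable (({ω | θ ω = -1}).indicator (fun _ => (1:ℝ))) P :=
      (integrable_const (1:ℝ)).indicator hA
    rw [integral_congr_ae hae, integral_sub hiB hiA,
      integral_indicator_const (1:ℝ) hB, integral_indicator_const (1:ℝ) hA, measureReal_def, measureReal_def, hθm, hθp]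
    simp
  -- measurability w.r.t. filtration
  have hmU1 : Measurable[ℱ 1] U := by
    rw [hF1]; exact measurable_iff_comap_le.mpr le_rfl
  have hmU : ∀ t, 1 ≤ t → Measurable[ℱ t] U := fun t ht => hmU1.mono (ℱ.mono ht) le_rfl
  have hmθt : ∀ t, 2 ≤ t → Measurable[ℱ t] θ := by
    intro t ht
    rw [hFt t ht]
    exact measurable_iff_comap_le.mpr le_sup_right
  -- Z as functions
  have hZ0 : Z 0 = fun _ => (1:ℝ) := funext fun ω => by rw [hZdef]; simp
  have hZt : ∀ t, 1 ≤ t → Z t = fun ω => 2 * U ω := fun t ht =>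
    funext fun ω => by rw [hZdef, if_neg (by omega : ¬ t = 0)]
  -- positivity
  refine ⟨?_, ?_, ?_, ?_, ?_, ?_⟩
  · intro t
    rcases Nat.eq_zero_or_pos t with rfl | ht
    · filter_upwards with ω; rw [hZ0]; norm_num
    · filter_upwards [hUpos] with ω hω
      rw [hZt t ht]; positivity
  · -- Martingale Z
    constructor
    · intro t
      rcases Nat.eq_zero_or_pos t with rfl | ht
      · rw [hZ0]; exact stronglyMeasurable_const
      · rw [hZt t ht]
        exact ((hmU t ht).const_mul 2).stronglyMeasurable
    · intro i j hij
      rcases Nat.eq_zero_or_pos j with rfl | hj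
      · interval_cases i
        rw [hZ0, hF0, condExp_const bot_le]
      · rcases Nat.eq_zero_or_pos i with rfl | hi
        · rw [hZt j hj, hZ0, hF0, condExp_bot]
          filter_upwards with ω
          rw [integral_const_mul, hUmean]; norm_num
        · rw [hZt j hj, ← hZt i hi]
          rw [hZt i hi]
          exact Eventually.of_forall (congrFun (condExp_of_stronglyMeasurable (ℱ.le i)
            ((hmU i hi).const_mul 2).stronglyMeasurable (hUint.const_mul 2)))
  · -- uniform integrability
    have hbd : ∀ t, ∀ᵐ ω ∂P, ‖Z t ω‖ ≤ 2 := by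
      intro t
      filter_upwards [hU01] with ω hω
      rw [hZdef]
      split
      · norm_num
      · rw [Real.norm_eq_abs, abs_of_nonneg (by linarith [hω.1])]
        linarith [hω.2]
    refine uniformIntegrable_of le_rfl one_ne_top (fun t => ?_) (fun ε hε => ⟨3, fun t => ?_⟩)
    · rcases Nat.eq_zero_or_pos t with rfl | ht
      · rw [hZ0]; exact aestronglyMeasurable_const
      · rw [hZt t ht]; exact (hU.const_mul 2).aestronglyMeasurable
    · have : ({x | (3:NNReal) ≤ ‖Z t x‖₊}).indicator (Z t) =ᵐ[P] 0 := by
        filter_upwards [hbd t] with ω hω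
        have hnot : ω ∉ {x | (3:NNReal) ≤ ‖Z t x‖₊} := by
          simp only [mem_setOf_eq, not_le, ← NNReal.coe_lt_coe, coe_nnnorm]
          push_cast
          linarith
        simp [Set.indicator_of_notMem hnot]
      rw [eLpNorm_congr_ae this, eLpNorm_zero]
      exact zero_le
  · -- product identity
    intro t
    by_cases ht : 2 ≤ t
    · filter_upwards [hUpos] with ω hω
      have hne : U ω ≠ 0 := ne_of_gt hω
      rw [hSdef, hZdef, if_pos ht, if_pos ht, if_neg (by omega : ¬ t = 0)]
      field_simp
    · filter_upwards with ω
      rw [hSdef, if_neg ht, if_neg ht, mul_zero]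
  · -- lintegral bound
    intro t
    by_cases ht : 2 ≤ t
    · have : (fun ω => ENNReal.ofReal (Z t ω * |S t ω|)) =ᵐ[P] fun _ => (2:ℝ≥0∞) := by
        filter_upwards [hUpos, hθ11] with ω hω hθω
        rw [hSdef, hZdef, if_pos ht, if_neg (by omega : ¬ t = 0)]
        have hne : U ω ≠ 0 := ne_of_gt hω
        have habs : |θ ω / U ω| = 1 / U ω := by
          rw [abs_div, abs_of_pos hω]
          rcases hθω with h | h <;> rw [h] <;> norm_num
        have h2 : 2 * U ω * |θ ω / U ω| = 2 := by rw [habs]; field_simp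
        rw [h2, ENNReal.ofReal_ofNat]
      rw [lintegral_congr_ae this, lintegral_const, measure_univ, mul_one]
    · have : ∀ ω, ENNReal.ofReal (Z t ω * |S t ω|) = 0 := by
        intro ω
        rw [hSdef, if_neg ht]
        simp
      simp only [this, lintegral_const, zero_mul]
      exact zero_le
  · -- Martingale ZS
    have hg0 : ∀ t, t < 2 → (fun ω => Z t ω * S t ω) = fun _ => (0:ℝ) := by
      intro t ht
      funext ω
      rw [hSdef, if_neg (by omega), mul_zero]
    have hgt : ∀ t, 2 ≤ t → (fun ω => Z t ω * S t ω) = fun ω => 2 * U ω * (θ ω / U ω) := by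
      intro t ht
      funext ω
      rw [hSdef, hZdef, if_pos ht, if_neg (by omega : ¬ t = 0)]
    have hgae : ∀ t, 2 ≤ t → (fun ω => Z t ω * S t ω) =ᵐ[P] fun ω => 2 * θ ω := by
      intro t ht
      rw [hgt t ht]
      filter_upwards [hUpos] with ω hω
      have hne : U ω ≠ 0 := ne_of_gt hω
      field_simp
    have h2θint : Integrable (fun ω => 2 * θ ω) P := hθint.const_mul 2
    have hgint : ∀ t, 2 ≤ t → Integrable (fun ω => Z t ω * S t ω) P := fun t ht =>
      h2θint.congr (hgae t ht).symm
    have h2θmean : ∫ ω, 2 * θ ω ∂P = 0 := by rw [integral_const_mul, hθmean, mul_zero]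
    -- conditional expectation of 2θ given ℱ 1 is 0
    have hcondθ : P[fun ω => 2 * θ ω | ℱ 1] =ᵐ[P] fun _ => (0:ℝ) := by
      have hind : ProbabilityTheory.Indep (MeasurableSpace.comap θ Real.measurableSpace)
          (ℱ 1 : MeasurableSpace Ω) P := by
        rw [hF1]
        exact ((ProbabilityTheory.IndepFun_iff_Indep U θ P).mp hindep).symm
      have hsm : StronglyMeasurable[MeasurableSpace.comap θ Real.measurableSpace]
          (fun ω => 2 * θ ω) :=
        ((measurable_iff_comap_le.mpr le_rfl).const_mul 2).stronglyMeasurable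
      have := condExp_indep_eq (μ := P) hθ.comap_le (ℱ.le 1) hsm hind
      refine this.trans ?_
      rw [h2θmean]
    constructor
    · intro t
      show StronglyMeasurable[ℱ t] (fun ω => Z t ω * S t ω)
      rcases lt_or_ge t 2 with ht | ht
      · rw [hg0 t ht]; exact stronglyMeasurable_const
      · rw [hgt t ht]
        have hmUt : Measurable[ℱ t] U := hmU t (by omega)
        have hmθ := hmθt t ht
        exact (((hmUt.const_mul 2).mul (hmθ.div hmUt))).stronglyMeasurable
    · intro i j hij
      show (P[fun ω => Z j ω * S j ω|(ℱ i : MeasurableSpace Ω)]) =ᵐ[P]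
        fun ω => Z i ω * S i ω
      rcases lt_or_ge j 2 with hj | hj
      · have hi : i < 2 := lt_of_le_of_lt hij hj
        rw [hg0 j hj, hg0 i hi]
        rw [condExp_const (ℱ.le i) (0:ℝ)]
      · rcases lt_or_ge i 2 with hi | hi
        · rcases Nat.eq_zero_or_pos i with rfl | hi1
          · rw [hg0 0 (by norm_num), hF0, condExp_bot]
            have : ∫ ω, Z j ω * S j ω ∂P = 0 := by
              rw [integral_congr_ae (hgae j hj), h2θmean]
            rw [this]
          · have hi1' : i = 1 := by omega
            subst hi1'
            rw [hg0 1 (by norm_num)]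
            calc P[fun ω => Z j ω * S j ω | ℱ 1]
                =ᵐ[P] P[fun ω => 2 * θ ω | ℱ 1] := condExp_congr_ae (hgae j hj)
              _ =ᵐ[P] fun _ => (0:ℝ) := hcondθ
        · have heq : (fun ω => Z j ω * S j ω) = fun ω => Z i ω * S i ω := by
            rw [hgt j hj, hgt i hi]
          rw [heq]
          have hmUt : Measurable[ℱ i] U := hmU i (by omega)
          have hmθ := hmθt i hi
          have hsm : StronglyMeasurable[ℱ i] (fun ω => Z i ω * S i ω) := by
            rw [hgt i hi]
            exact (((hmUt.const_mul 2).mul (hmθ.div hmUt))).stronglyMeasurable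
          exact Eventually.of_forall (congrFun
            (condExp_of_stronglyMeasurable (ℱ.le i) hsm (hgint i hi)))

end
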